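/- Let μ be a finite absolutely continuous Borel measure on ℝ^n with bounded first moment whose support is connected. Let H_1 and H_2 be distinct hyperplanes, each containing interior points of supp(μ), with corresponding closed lower halfspaces H_1^-, H_2^-. Then b_μ(H_1^-) ≠ b_μ(H_2^-). -/

import Mathlib

open MeasureTheory Set RealInnerProductSpace

/-- The support of a measure: points all of whose open neighbourhoods have positive
measure. -/
def measSupport {E : Type*} [TopologicalSpace E] [MeasurableSpace E]
    (μ : MeasureTheory.Measure E) : Set E :=
  {x | ∀ U : Set E, IsOpen U → x ∈ U → 0 < μ U}

section Aux

variable {n : ℕ}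

local notation "E" => EuclideanSpace ℝ (Fin n)

lemma contInner (θ : E) : Continuous fun x : E => ⟪x, θ⟫ :=
  continuous_id.inner continuous_const

lemma lower_open_pos (μ : Measure E) {θ : E} {c : ℝ} (hθ : ‖θ‖ = 1)
    (hint : ({x | ⟪x, θ⟫ = c} ∩ interior (measSupport μ)).Nonempty) :
    0 < μ {x | ⟪x, θ⟫ < c} := by
  obtain ⟨p, hp, hpi⟩ := hint
  obtain ⟨ε, εpos, hball⟩ := Metric.isOpen_iff.mp isOpen_interior p hpi
  have hq_supp : p - (ε/2) • θ ∈ measSupport μ := by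
    apply interior_subset (hball _)
    simp only [Metric.mem_ball, dist_eq_norm, sub_sub_cancel_left, norm_neg, norm_smul,
      Real.norm_eq_abs, hθ, mul_one]
    rw [abs_of_pos (by linarith)]; linarith
  apply hq_supp _ (isOpen_lt (contInner θ) continuous_const)
  have hpθ : ⟪p, θ⟫ = c := hp
  have hθθ : ⟪θ, θ⟫ = (1 : ℝ) := by
    rw [real_inner_self_eq_norm_mul_norm, hθ]; norm_num
  simp only [mem_setOf_eq, inner_sub_left, real_inner_smul_left, hpθ, hθθ]
  linarith

lemma symdiff_pos (μ : Measure E) {θ₁ θ₂ : E} {c₁ c₂ : ℝ}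
    (hθ₁ : ‖θ₁‖ = 1) (hθ₂ : ‖θ₂‖ = 1)
    (hdist : ({x | ⟪x, θ₁⟫ = c₁} : Set E) ≠ {x | ⟪x, θ₂⟫ = c₂})
    (hint₁ : ({x | ⟪x, θ₁⟫ = c₁} ∩ interior (measSupport μ)).Nonempty) :
    0 < μ ({x | ⟪x, θ₁⟫ ≤ c₁} \ {x | ⟪x, θ₂⟫ ≤ c₂}) ∨
      0 < μ ({x | ⟪x, θ₂⟫ ≤ c₂} \ {x | ⟪x, θ₁⟫ ≤ c₁}) := by
  obtain ⟨p, hp, hpi⟩ := hint₁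
  have hpθ : ⟪p, θ₁⟫ = c₁ := hp
  obtain ⟨ε, εpos, hball⟩ := Metric.isOpen_iff.mp isOpen_interior p hpi
  have hsupp : ∀ q : E, ‖q - p‖ < ε → q ∈ measSupport μ := fun q h =>
    interior_subset (hball (by simpa [Metric.mem_ball, dist_eq_norm] using h))
  have hθθ₁ : ⟪θ₁, θ₁⟫ = (1 : ℝ) := by
    rw [real_inner_self_eq_norm_mul_norm, hθ₁]; norm_num
  have ha : |⟪θ₁, θ₂⟫| ≤ 1 := by
    have := abs_real_inner_le_norm θ₁ θ₂
    rwa [hθ₁, hθ₂, mul_one] at this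
  have hleft : ∀ q : E, q ∈ measSupport μ → ⟪q, θ₁⟫ < c₁ → c₂ < ⟪q, θ₂⟫ →
      0 < μ ({x | ⟪x, θ₁⟫ ≤ c₁} \ {x | ⟪x, θ₂⟫ ≤ c₂}) := by
    intro q hq h1 h2
    have hV : IsOpen ({x : E | ⟪x, θ₁⟫ < c₁} ∩ {x | c₂ < ⟪x, θ₂⟫}) :=
      (isOpen_lt (contInner θ₁) continuous_const).inter
        (isOpen_lt continuous_const (contInner θ₂))
    refine lt_of_lt_of_le (hq _ hV ⟨h1, h2⟩) (measure_mono ?_)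
    rintro x ⟨hx1, hx2⟩
    have hx1' : ⟪x, θ₁⟫ < c₁ := hx1
    have hx2' : c₂ < ⟪x, θ₂⟫ := hx2
    exact ⟨hx1'.le, not_le.2 hx2'⟩
  have hright : ∀ q : E, q ∈ measSupport μ → ⟪q, θ₂⟫ < c₂ → c₁ < ⟪q, θ₁⟫ →
      0 < μ ({x | ⟪x, θ₂⟫ ≤ c₂} \ {x | ⟪x, θ₁⟫ ≤ c₁}) := by
    intro q hq h1 h2
    have hV : IsOpen ({x : E | ⟪x, θ₂⟫ < c₂} ∩ {x | c₁ < ⟪x, θ₁⟫}) :=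
      (isOpen_lt (contInner θ₂) continuous_const).inter
        (isOpen_lt continuous_const (contInner θ₁))
    refine lt_of_lt_of_le (hq _ hV ⟨h1, h2⟩) (measure_mono ?_)
    rintro x ⟨hx1, hx2⟩
    have hx1' : ⟪x, θ₂⟫ < c₂ := hx1
    have hx2' : c₁ < ⟪x, θ₁⟫ := hx2
    exact ⟨hx1'.le, not_le.2 hx2'⟩
  rcases lt_trichotomy (⟪p, θ₂⟫ : ℝ) c₂ with hd | hd | hd
  · -- p strictly below H₂ : move up along θ₁, land in A₂ᶜ? no: in A₂ \ A₁
    right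
    set t : ℝ := min (ε/2) ((c₂ - ⟪p, θ₂⟫)/2) with ht_def
    have ht : 0 < t := lt_min (by linarith) (by linarith)
    have ht1 : t ≤ ε/2 := min_le_left _ _
    have ht2 : t ≤ (c₂ - ⟪p, θ₂⟫)/2 := min_le_right _ _
    refine hright (p + t • θ₁) (hsupp _ ?_) ?_ ?_
    · simp only [add_sub_cancel_left, norm_smul, Real.norm_eq_abs, hθ₁, mul_one,
        abs_of_pos ht]
      linarith
    · have : t * ⟪θ₁, θ₂⟫ ≤ t := by
        calc t * ⟪θ₁, θ₂⟫ ≤ t * |⟪θ₁, θ₂⟫| :=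
              mul_le_mul_of_nonneg_left (le_abs_self _) ht.le
          _ ≤ t * 1 := mul_le_mul_of_nonneg_left ha ht.le
          _ = t := mul_one t
      simp only [mem_setOf_eq, inner_add_left, real_inner_smul_left]
      linarith
    · simp only [mem_setOf_eq, inner_add_left, real_inner_smul_left, hpθ, hθθ₁]
      linarith
  · -- p on H₂
    by_cases hθ : θ₁ = θ₂
    · exfalso
      apply hdist
      subst hθ
      have : c₁ = c₂ := by rw [← hpθ, hd]
      rw [this]
    · left
      have hlt : ⟪θ₁, θ₂⟫ < 1 := by
        have hne : θ₁ - θ₂ ≠ 0 := sub_ne_zero.2 hθ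
        have hn : 0 < ‖θ₁ - θ₂‖ := norm_pos_iff.2 hne
        have hsq : ‖θ₁ - θ₂‖^2 = ‖θ₁‖^2 - 2 * ⟪θ₁, θ₂⟫ + ‖θ₂‖^2 := by
          rw [@norm_sub_sq_real]
      -- ‖θ₁-θ₂‖² = 2 - 2⟪θ₁,θ₂⟫ > 0
        rw [hθ₁, hθ₂] at hsq
        nlinarith
      set t : ℝ := ε / (‖θ₂ - θ₁‖ + 1) with ht_def
      have hden : 0 < ‖θ₂ - θ₁‖ + 1 := by positivity
      have ht : 0 < t := div_pos εpos hden
      refine hleft (p + t • (θ₂ - θ₁)) (hsupp _ ?_) ?_ ?_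
      · simp only [add_sub_cancel_left, norm_smul, Real.norm_eq_abs, abs_of_pos ht]
        rw [ht_def, div_mul_eq_mul_div, div_lt_iff₀ hden]
        nlinarith [norm_nonneg (θ₂ - θ₁)]
      · simp only [mem_setOf_eq, inner_add_left, real_inner_smul_left, inner_sub_left,
          hpθ, hθθ₁]
        have : ⟪θ₂, θ₁⟫ = ⟪θ₁, θ₂⟫ := real_inner_comm _ _
        nlinarith
      · have hθθ₂ : ⟪θ₂, θ₂⟫ = (1 : ℝ) := by
          rw [real_inner_self_eq_norm_mul_norm, hθ₂]; norm_num
        simp only [mem_setOf_eq, inner_add_left, real_inner_smul_left, inner_sub_left,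
          hd, hθθ₂]
        nlinarith
  · -- p strictly above H₂ : move down along θ₁, land in A₁ \ A₂
    left
    set t : ℝ := min (ε/2) ((⟪p, θ₂⟫ - c₂)/2) with ht_def
    have ht : 0 < t := lt_min (by linarith) (by linarith)
    have ht1 : t ≤ ε/2 := min_le_left _ _
    have ht2 : t ≤ (⟪p, θ₂⟫ - c₂)/2 := min_le_right _ _
    refine hleft (p - t • θ₁) (hsupp _ ?_) ?_ ?_
    · simp only [sub_sub_cancel_left, norm_neg, norm_smul, Real.norm_eq_abs, hθ₁,
        mul_one, abs_of_pos ht]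
      linarith
    · simp only [mem_setOf_eq, inner_sub_left, real_inner_smul_left, hpθ, hθθ₁]
      linarith
    · have : t * ⟪θ₁, θ₂⟫ ≤ t := by
        calc t * ⟪θ₁, θ₂⟫ ≤ t * |⟪θ₁, θ₂⟫| :=
              mul_le_mul_of_nonneg_left (le_abs_self _) ht.le
          _ ≤ t * 1 := mul_le_mul_of_nonneg_left ha ht.le
          _ = t := mul_one t
      simp only [mem_setOf_eq, inner_sub_left, real_inner_smul_left]
      linarith

lemma setIntegral_gt_const {μ : Measure E} [IsFiniteMeasure μ] {f : E → ℝ} {S : Set E}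
    {c : ℝ} (hS : MeasurableSet S) (hf : Integrable f μ) (hfc : ∀ x ∈ S, c ≤ f x)
    (hpos : 0 < μ (S ∩ {x | c < f x})) :
    c * (μ S).toReal < ∫ x in S, f x ∂μ := by
  set g : E → ℝ := fun x => max (f x - c) 0 with hg_def
  have hgint : Integrable g μ := (hf.sub (integrable_const c)).pos_part
  have h1 : ∫ x in S, g x ∂μ = ∫ x in S, (f x - c) ∂μ :=
    setIntegral_congr_fun hS (fun x hx => max_eq_left (sub_nonneg.2 (hfc x hx)))
  have h2 : 0 < ∫ x in S, g x ∂μ := by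
    refine (setIntegral_pos_iff_support_of_nonneg_ae
      (Filter.Eventually.of_forall fun x => le_max_right _ _) hgint.integrableOn).mpr ?_
    refine lt_of_lt_of_le hpos (measure_mono ?_)
    rintro x ⟨hxS, hxf⟩
    exact ⟨(lt_of_lt_of_le (sub_pos.2 hxf) (le_max_left _ _)).ne', hxS⟩
  have h3 : ∫ x in S, (f x - c) ∂μ = (∫ x in S, f x ∂μ) - (μ S).toReal * c := by
    rw [integral_sub hf.integrableOn
      (integrableOn_const (measure_ne_top μ S)), setIntegral_const,
      smul_eq_mul, measureReal_def]
  rw [h1, h3] at h2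
  linarith

lemma aux (μ : Measure E) [IsFiniteMeasure μ]
    (hmom : Integrable (fun x => ‖x‖) μ)
    (θ₁ θ₂ : E) (hθ₁ : ‖θ₁‖ = 1) (hθ₂ : ‖θ₂‖ = 1) (c₁ c₂ : ℝ)
    (hdist : ({x | ⟪x, θ₁⟫ = c₁} : Set E) ≠ {x | ⟪x, θ₂⟫ = c₂})
    (hint₁ : ({x | ⟪x, θ₁⟫ = c₁} ∩ interior (measSupport μ)).Nonempty)
    (hint₂ : ({x | ⟪x, θ₂⟫ = c₂} ∩ interior (measSupport μ)).Nonempty)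
    (hle : μ {x | ⟪x, θ₁⟫ ≤ c₁} ≤ μ {x | ⟪x, θ₂⟫ ≤ c₂}) :
    (μ {x | ⟪x, θ₁⟫ ≤ c₁}).toReal⁻¹ • (∫ x in {x | ⟪x, θ₁⟫ ≤ c₁}, x ∂μ)
      ≠ (μ {x | ⟪x, θ₂⟫ ≤ c₂}).toReal⁻¹ • (∫ x in {x | ⟪x, θ₂⟫ ≤ c₂}, x ∂μ) := by
  intro hEq
  set A₁ : Set E := {x | ⟪x, θ₁⟫ ≤ c₁} with hA₁def
  set A₂ : Set E := {x | ⟪x, θ₂⟫ ≤ c₂} with hA₂def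
  have mA₁ : MeasurableSet A₁ :=
    measurableSet_le (contInner θ₁).measurable measurable_const
  have mA₂ : MeasurableSet A₂ :=
    measurableSet_le (contInner θ₂).measurable measurable_const
  set f : E → ℝ := fun x => ⟪x, θ₁⟫ with hf_def
  have hf : Integrable f μ := by
    refine hmom.mono (contInner θ₁).aestronglyMeasurable
      (Filter.Eventually.of_forall fun x => ?_)
    have := abs_real_inner_le_norm x θ₁
    rw [hθ₁, mul_one] at this
    simpa [Real.norm_eq_abs, abs_of_nonneg (norm_nonneg x)] using this
  have hid : Integrable (fun x : E => x) μ := by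
    refine hmom.mono continuous_id.aestronglyMeasurable
      (Filter.Eventually.of_forall fun x => ?_)
    simp [Real.norm_eq_abs, abs_of_nonneg (norm_nonneg x)]
  -- masses
  have hμ₁pos : 0 < μ A₁ := by
    refine lt_of_lt_of_le (lower_open_pos μ hθ₁ hint₁) (measure_mono ?_)
    intro x hx
    have hx' : ⟪x, θ₁⟫ < c₁ := hx
    exact hx'.le
  have hμ₂pos : 0 < μ A₂ := by
    refine lt_of_lt_of_le (lower_open_pos μ hθ₂ hint₂) (measure_mono ?_)
    intro x hx
    have hx' : ⟪x, θ₂⟫ < c₂ := hx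
    exact hx'.le
  set m₁ : ℝ := (μ A₁).toReal with hm₁def
  set m₂ : ℝ := (μ A₂).toReal with hm₂def
  have hm₁pos : 0 < m₁ := ENNReal.toReal_pos hμ₁pos.ne' (measure_ne_top μ _)
  have hm₂pos : 0 < m₂ := ENNReal.toReal_pos hμ₂pos.ne' (measure_ne_top μ _)
  have hm : m₁ ≤ m₂ := ENNReal.toReal_mono (measure_ne_top μ _) hle
  -- apply ⟪·, θ₁⟫ to the barycenter equation
  have key : ∀ S : Set E, ⟪(∫ x in S, x ∂μ), θ₁⟫ = ∫ x in S, f x ∂μ := by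
    intro S
    have h := ContinuousLinearMap.integral_comp_comm (innerSL ℝ θ₁)
      (μ := μ.restrict S) hid.integrableOn
    simp only [innerSL_apply_apply] at h
    rw [real_inner_comm, ← h]
    exact integral_congr_ae (Filter.Eventually.of_forall fun x => real_inner_comm _ _)
  have hEq' : m₁⁻¹ * ∫ x in A₁, f x ∂μ = m₂⁻¹ * ∫ x in A₂, f x ∂μ := by
    have h := congrArg (fun v : E => ⟪v, θ₁⟫) hEq
    simpa only [real_inner_smul_left, key] using h
  set J₁ : ℝ := ∫ x in A₁, f x ∂μ with hJ₁def
  set J₂ : ℝ := ∫ x in A₂, f x ∂μ with hJ₂def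
  have hkey : m₂ * J₁ = m₁ * J₂ := by
    field_simp at hEq'
    linarith
  -- decompositions
  set r : ℝ := (μ (A₁ ∩ A₂)).toReal with hrdef
  set s₁ : ℝ := (μ (A₁ \ A₂)).toReal with hs₁def
  set s₂ : ℝ := (μ (A₂ \ A₁)).toReal with hs₂def
  have hm₁split : m₁ = r + s₁ := by
    rw [hm₁def, hrdef, hs₁def, ← ENNReal.toReal_add (measure_ne_top μ _) (measure_ne_top μ _),
      measure_inter_add_diff A₁ mA₂]
  have hm₂split : m₂ = r + s₂ := by
    rw [hm₂def, hrdef, hs₂def, inter_comm,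
      ← ENNReal.toReal_add (measure_ne_top μ _) (measure_ne_top μ _),
      measure_inter_add_diff A₂ mA₁]
  set JB : ℝ := ∫ x in A₁ ∩ A₂, f x ∂μ with hJBdef
  have hJ₁split : J₁ = JB + ∫ x in A₁ \ A₂, f x ∂μ := by
    rw [hJ₁def, ← integral_inter_add_diff mA₂ hf.integrableOn]
  have hJ₂split : J₂ = JB + ∫ x in A₂ \ A₁, f x ∂μ := by
    rw [hJ₂def, ← integral_inter_add_diff mA₁ hf.integrableOn, hJBdef, inter_comm]
  -- bounds
  have hub : ∫ x in A₁ \ A₂, f x ∂μ ≤ c₁ * s₁ := by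
    have := setIntegral_mono_on hf.integrableOn
      (integrableOn_const (measure_ne_top μ (A₁ \ A₂)))
      (mA₁.diff mA₂) (fun x hx => by exact hx.1)
    rwa [setIntegral_const, smul_eq_mul, mul_comm] at this
  have hlb : c₁ * s₂ ≤ ∫ x in A₂ \ A₁, f x ∂μ := by
    have := setIntegral_mono_on
      (integrableOn_const (measure_ne_top μ (A₂ \ A₁)))
      hf.integrableOn (mA₂.diff mA₁)
      (fun x hx => by exact le_of_lt (not_le.1 hx.2))
    rwa [setIntegral_const, smul_eq_mul, mul_comm] at this
  -- strict upper bound on J₁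
  have hb1 : J₁ < c₁ * m₁ := by
    have hneg : (fun x => -f x) = fun x : E => -⟪x, θ₁⟫ := rfl
    have hsetpos : 0 < μ (A₁ ∩ {x | -c₁ < -f x}) := by
      have hseteq : A₁ ∩ {x : E | -c₁ < -f x} = {x : E | ⟪x, θ₁⟫ < c₁} := by
        ext x
        simp only [mem_inter_iff, mem_setOf_eq, neg_lt_neg_iff, hA₁def, hf_def]
        exact ⟨fun h => h.2, fun h => ⟨h.le, h⟩⟩
      rw [hseteq]
      exact lower_open_pos μ hθ₁ hint₁
    have hnegint : Integrable (fun x => -f x) μ := hf.neg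
    have := setIntegral_gt_const mA₁ hnegint
      (fun x hx => by
        have hx' : ⟪x, θ₁⟫ ≤ c₁ := hx
        exact neg_le_neg hx') hsetpos
    rw [integral_neg] at this
    have hJ : -(c₁ * m₁) < -J₁ := by
      rw [hm₁def]; linarith
    linarith
  -- final contradiction
  rcases lt_or_eq_of_le hm with hlt | heq
  · have e1 : c₁ * (m₂ - m₁) ≤ J₂ - J₁ := by
      rw [hJ₁split, hJ₂split, hm₁split, hm₂split]
      have : c₁ * (r + s₂ - (r + s₁)) = c₁ * s₂ - c₁ * s₁ := by ring
      linarith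
    have e2 : (m₂ - m₁) * J₁ < (m₂ - m₁) * (c₁ * m₁) :=
      mul_lt_mul_of_pos_left hb1 (by linarith)
    have e3 : m₁ * (J₂ - J₁) = (m₂ - m₁) * J₁ := by linear_combination -hkey
    have e4 : m₁ * (c₁ * (m₂ - m₁)) ≤ m₁ * (J₂ - J₁) :=
      mul_le_mul_of_nonneg_left e1 hm₁pos.le
    nlinarith [e2, e3, e4]
  · have hs : s₁ = s₂ := by
      rw [hm₁split, hm₂split] at heq
      linarith
    have hs₂pos : 0 < s₂ := by
      rcases symdiff_pos μ hθ₁ hθ₂ hdist hint₁ with h | h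
      · rw [← hs]
        exact ENNReal.toReal_pos h.ne' (measure_ne_top μ _)
      · exact ENNReal.toReal_pos h.ne' (measure_ne_top μ _)
    have hμs₂pos : 0 < μ (A₂ \ A₁) := by
      by_contra h
      push_neg at h
      have : μ (A₂ \ A₁) = 0 := le_antisymm h zero_le
      rw [hs₂def, this] at hs₂pos
      simp at hs₂pos
    have hstrict : c₁ * s₂ < ∫ x in A₂ \ A₁, f x ∂μ := by
      refine setIntegral_gt_const (mA₂.diff mA₁) hf
        (fun x hx => le_of_lt (not_le.1 hx.2)) ?_
      have : (A₂ \ A₁) ∩ {x : E | c₁ < f x} = A₂ \ A₁ :=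
        inter_eq_left.2 (fun x hx => by
          have hx' : ¬ ⟪x, θ₁⟫ ≤ c₁ := hx.2
          exact not_le.1 hx')
      rw [this]
      exact hμs₂pos
    have hJeq : J₁ = J₂ := by
      have : m₂ * J₁ = m₂ * J₂ := by rw [hkey, heq]
      exact mul_left_cancel₀ hm₂pos.ne' this
    rw [hJ₁split, hJ₂split] at hJeq
    rw [hs] at hub
    linarith

end Aux

/-- No two distinct halfspaces, whose boundary hyperplanes meet the interior of the
(connected) support of `μ`, share the same barycenter. -/
theorem halfspace_barycenter_unique (n : ℕ)
    (μ : Measure (EuclideanSpace ℝ (Fin n)))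
    [IsFiniteMeasure μ] (hac : μ ≪ volume)
    (hmom : Integrable (fun x => ‖x‖) μ)
    (hconn : IsConnected (measSupport μ))
    (θ₁ θ₂ : EuclideanSpace ℝ (Fin n)) (hθ₁ : ‖θ₁‖ = 1) (hθ₂ : ‖θ₂‖ = 1)
    (c₁ c₂ : ℝ)
    (hdist : ({x | ⟪x, θ₁⟫ = c₁} : Set (EuclideanSpace ℝ (Fin n)))
      ≠ {x | ⟪x, θ₂⟫ = c₂})
    (hint₁ : ({x | ⟪x, θ₁⟫ = c₁} ∩ interior (measSupport μ)).Nonempty)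
    (hint₂ : ({x | ⟪x, θ₂⟫ = c₂} ∩ interior (measSupport μ)).Nonempty) :
    (μ {x | ⟪x, θ₁⟫ ≤ c₁}).toReal⁻¹ • (∫ x in {x | ⟪x, θ₁⟫ ≤ c₁}, x ∂μ)
      ≠ (μ {x | ⟪x, θ₂⟫ ≤ c₂}).toReal⁻¹ • (∫ x in {x | ⟪x, θ₂⟫ ≤ c₂}, x ∂μ) := by
  rcases le_total (μ {x | ⟪x, θ₁⟫ ≤ c₁}) (μ {x | ⟪x, θ₂⟫ ≤ c₂}) with h | h
  · exact aux μ hmom θ₁ θ₂ hθ₁ hθ₂ c₁ c₂ hdist hint₁ hint₂ h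
  · exact (aux μ hmom θ₂ θ₁ hθ₂ hθ₁ c₂ c₁ hdist.symm hint₂ hint₁ h).symm
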